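/- Let ε₀ > 0 be sufficiently small, let K_L be sufficiently large, let a_{i,j} be real numbers (2 ≤ i ≤ d, 0 ≤ j ≤ i) satisfying |a_{2,0}| + |a_{2,2}| + 100^d Σ_{i=3}^{d} Σ_{j=0}^{i} |a_{i,j}| ≤ ε₀, and let a ∈ [-10,10]. With F(θ) = (a_{2,0} + Σ_{i=3}^{d} a_{i,i−2} a^{i−2}) cos²θ + (1 + Σ_{i=3}^{d} (i−1) a_{i,i−1} a^{i−2}) sinθ cosθ + (a_{2,2} + Σ_{i=3}^{d} (i(i−1)/2) a_{i,i} a^{i−2}) sin²θ and c₁ = 10^{-10d} ε₀ K_L^{-1}, one has #{θ ∈ c₁ℤ ∩ [-π/4, π/4] : |F(θ)| ≤ 10^{-3d} ε₀ K_L^{-1}} ≤ 10^{8d}. -/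

import Mathlib

noncomputable section

/-- Coefficient smallness condition
`|a₂₀| + |a₂₂| + 100^d Σ_{i=3}^d Σ_{j=0}^i |a_{i,j}| ≤ ε₀`. -/
def CoeffSmall (d : ℕ) (ε₀ : ℝ) (a : ℕ → ℕ → ℝ) : Prop :=
  |a 2 0| + |a 2 2| +
      100 ^ d * ∑ i ∈ Finset.Icc 3 d, ∑ j ∈ Finset.range (i + 1), |a i j| ≤ ε₀

/-- The coefficient of `ξ²` after translating `(0,a)` to the origin and rotating by `θ`:
`F(θ) = (a₂₀ + Σ a_{i,i-2} a^{i-2}) cos²θ + (1 + Σ (i-1)a_{i,i-1} a^{i-2}) sinθcosθ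
       + (a₂₂ + Σ (i(i-1)/2) a_{i,i} a^{i-2}) sin²θ`. -/
def Fcoef (d : ℕ) (a : ℕ → ℕ → ℝ) (t θ : ℝ) : ℝ :=
  (a 2 0 + ∑ i ∈ Finset.Icc 3 d, a i (i - 2) * t ^ (i - 2)) * Real.cos θ ^ 2 +
    (1 + ∑ i ∈ Finset.Icc 3 d, ((i : ℝ) - 1) * a i (i - 1) * t ^ (i - 2)) *
      Real.sin θ * Real.cos θ +
    (a 2 2 + ∑ i ∈ Finset.Icc 3 d, ((i : ℝ) * ((i : ℝ) - 1) / 2) * a i i * t ^ (i - 2)) *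
      Real.sin θ ^ 2
/-- `c₁(K_L⁻¹) = 10^{-10d} ε₀ K_L^{-1}`. -/
def c1 (d : ℕ) (ε₀ KL : ℝ) : ℝ := ε₀ / (10 ^ (10 * d) * KL)

lemma aux_ten_sq (d : ℕ) (hd : 3 ≤ d) : (10 : ℝ) * (d : ℝ) ^ 2 ≤ 10 ^ d := by
  have h : 10 * d ^ 2 ≤ 10 ^ d := by
    induction d with
    | zero => omega
    | succ n ih =>
      rcases Nat.lt_or_ge n 3 with h3 | h3
      · interval_cases n <;> norm_num
      · have := ih (by omega)
        have h2 : (n+1)^2 ≤ 2 * n^2 := by nlinarith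
        calc 10 * (n+1)^2 ≤ 20 * n^2 := by omega
          _ ≤ 2 * 10 ^ n := by omega
          _ ≤ 10 ^ (n+1) := by rw [pow_succ]; omega
  calc (10:ℝ) * (d:ℝ)^2 = ((10 * d^2 : ℕ) : ℝ) := by push_cast; ring
    _ ≤ ((10^d : ℕ) : ℝ) := by exact_mod_cast h
    _ = 10 ^ d := by push_cast; ring

lemma aux_sincos (θ : ℝ) (h : |θ| ≤ Real.pi / 4) : |θ| / 4 ≤ |Real.sin θ * Real.cos θ| := by
  have hpi := Real.pi_le_four
  have hpi0 := Real.pi_pos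
  have h2 : |θ| ≤ Real.pi / 2 := by linarith
  have hs := Real.mul_abs_le_abs_sin h2
  have hc : (1:ℝ)/2 ≤ Real.cos θ := by
    rw [← Real.cos_abs]
    have := Real.cos_le_cos_of_nonneg_of_le_pi (abs_nonneg θ) (by linarith) h
    rw [Real.cos_pi_div_four] at this
    have h1 : (1:ℝ) ≤ Real.sqrt 2 := by
      rw [show (1:ℝ) = Real.sqrt 1 by simp]
      exact Real.sqrt_le_sqrt (by norm_num)
    linarith
  rw [abs_mul, abs_of_nonneg (by linarith : (0:ℝ) ≤ Real.cos θ)]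
  have h4 : |θ| / 2 ≤ 2 / Real.pi * |θ| := by
    rw [div_mul_eq_mul_div, le_div_iff₀ hpi0]
    nlinarith [abs_nonneg θ]
  nlinarith [abs_nonneg (Real.sin θ), abs_nonneg θ]

/-- Under the coefficient smallness condition, the three sums appearing in `Fcoef`
are all at most `ε₀ / 10` in absolute value. -/
lemma sum_small (d : ℕ) (hd : 3 ≤ d) (ε₀ : ℝ) (hε₀ : 0 < ε₀) (a : ℕ → ℕ → ℝ)
    (ha : CoeffSmall d ε₀ a) (t : ℝ) (ht : |t| ≤ 10) :
    |a 2 0| ≤ ε₀ ∧ |a 2 2| ≤ ε₀ ∧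
    |∑ i ∈ Finset.Icc 3 d, a i (i-2) * t^(i-2)| ≤ ε₀/10 ∧
    |∑ i ∈ Finset.Icc 3 d, ((i:ℝ)-1) * a i (i-1) * t^(i-2)| ≤ ε₀/10 ∧
    |∑ i ∈ Finset.Icc 3 d, ((i:ℝ)*((i:ℝ)-1)/2) * a i i * t^(i-2)| ≤ ε₀/10 := by
  have hS3nn : (0:ℝ) ≤ ∑ i ∈ Finset.Icc 3 d, ∑ j ∈ Finset.range (i + 1), |a i j| :=
    Finset.sum_nonneg fun i _ => Finset.sum_nonneg fun j _ => abs_nonneg _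
  have h100 : (1:ℝ) ≤ 100 ^ d := one_le_pow₀ (by norm_num)
  have h100pos : (0:ℝ) < 100 ^ d := by positivity
  unfold CoeffSmall at ha
  have ha20 : |a 2 0| ≤ ε₀ := by nlinarith [abs_nonneg (a 2 2), mul_nonneg h100pos.le hS3nn]
  have ha22 : |a 2 2| ≤ ε₀ := by nlinarith [abs_nonneg (a 2 0), mul_nonneg h100pos.le hS3nn]
  have hS3 : ∑ i ∈ Finset.Icc 3 d, ∑ j ∈ Finset.range (i + 1), |a i j| ≤ ε₀ / 100 ^ d := by
    rw [le_div_iff₀ h100pos]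
    nlinarith [abs_nonneg (a 2 0), abs_nonneg (a 2 2)]
  have hd3 : (3:ℝ) ≤ (d:ℝ) := by exact_mod_cast hd
  have hd9 : (9:ℝ) ≤ (d:ℝ)^2 := by nlinarith
  have key : ∀ g : ℕ → ℝ,
      (∀ i ∈ Finset.Icc 3 d, |g i| ≤ (d:ℝ)^2 * 10^d * ∑ k ∈ Finset.range (i+1), |a i k|) →
      |∑ i ∈ Finset.Icc 3 d, g i| ≤ ε₀/10 := by
    intro g hg
    have hpowd : (0:ℝ) < 10 ^ d := by positivity
    calc |∑ i ∈ Finset.Icc 3 d, g i| ≤ ∑ i ∈ Finset.Icc 3 d, |g i| :=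
          Finset.abs_sum_le_sum_abs _ _
      _ ≤ ∑ i ∈ Finset.Icc 3 d, (d:ℝ)^2 * 10^d * ∑ k ∈ Finset.range (i+1), |a i k| :=
          Finset.sum_le_sum hg
      _ = (d:ℝ)^2 * 10^d * ∑ i ∈ Finset.Icc 3 d, ∑ k ∈ Finset.range (i+1), |a i k| := by
          rw [Finset.mul_sum]
      _ ≤ (d:ℝ)^2 * 10^d * (ε₀ / 100^d) :=
          mul_le_mul_of_nonneg_left hS3 (by positivity)
      _ = (d:ℝ)^2 * ε₀ / 10^d := by
          have h100d : (100:ℝ)^d = 10^d * 10^d := by rw [← mul_pow]; norm_num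
          rw [h100d]; field_simp
      _ ≤ ε₀/10 := by
          rw [div_le_div_iff₀ hpowd (by norm_num)]
          nlinarith [aux_ten_sq d hd, hε₀.le, hpowd]
  have hterm : ∀ i ∈ Finset.Icc 3 d, ∀ (c0 : ℝ) (j : ℕ), |c0| ≤ (d:ℝ)^2 → j ≤ i →
      |c0 * a i j * t ^ (i-2)| ≤ (d:ℝ)^2 * 10^d * ∑ k ∈ Finset.range (i+1), |a i k| := by
    intro i hi c0 j hc0 hj
    rw [Finset.mem_Icc] at hi
    rw [abs_mul, abs_mul, abs_pow]
    have h1 : |a i j| ≤ ∑ k ∈ Finset.range (i+1), |a i k| :=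
      Finset.single_le_sum (f := fun k => |a i k|) (fun k _ => abs_nonneg _)
        (Finset.mem_range.mpr (by omega))
    have h2 : |t| ^ (i-2) ≤ 10 ^ d := by
      calc |t|^(i-2) ≤ 10^(i-2) := pow_le_pow_left₀ (abs_nonneg t) ht _
        _ ≤ 10^d := pow_le_pow_right₀ (by norm_num) (by omega)
    calc |c0| * |a i j| * |t|^(i-2)
        ≤ ((d:ℝ)^2 * (∑ k ∈ Finset.range (i+1), |a i k|)) * 10^d :=
          mul_le_mul (mul_le_mul hc0 h1 (abs_nonneg _) (by positivity)) h2
            (by positivity) (by positivity)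
      _ = (d:ℝ)^2 * 10^d * ∑ k ∈ Finset.range (i+1), |a i k| := by ring
  refine ⟨ha20, ha22, ?_, ?_, ?_⟩
  · apply key
    intro i hi
    have h := hterm i hi 1 (i-2) (by rw [abs_one]; linarith) (by omega)
    rwa [one_mul] at h
  · apply key
    intro i hi
    have hi' := Finset.mem_Icc.mp hi
    have hiR : (i:ℝ) ≤ (d:ℝ) := by exact_mod_cast hi'.2
    have hiR3 : (3:ℝ) ≤ (i:ℝ) := by exact_mod_cast hi'.1
    exact hterm i hi ((i:ℝ)-1) (i-1) (by rw [abs_of_nonneg (by linarith)]; nlinarith) (by omega)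
  · apply key
    intro i hi
    have hi' := Finset.mem_Icc.mp hi
    have hiR : (i:ℝ) ≤ (d:ℝ) := by exact_mod_cast hi'.2
    have hiR3 : (3:ℝ) ≤ (i:ℝ) := by exact_mod_cast hi'.1
    exact hterm i hi ((i:ℝ)*((i:ℝ)-1)/2) i (by rw [abs_of_nonneg (by nlinarith)]; nlinarith)
      le_rfl

set_option maxHeartbeats 2000000 in
/-- Core closeness: two near-roots of `A cos² + B sin cos + C sin²` are within `4δ`. -/
lemma core_close (A B C ε₀ δ : ℝ) (hε₀ : 0 < ε₀) (hε' : ε₀ ≤ 1/1000)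
    (hδ : 0 < δ) (hδε : δ ≤ ε₀)
    (hA : |A| ≤ 11/10 * ε₀) (hC : |C| ≤ 11/10 * ε₀) (hB9 : 9/10 ≤ B) (hB11 : B ≤ 11/10)
    (f : ℝ → ℝ)
    (hf : ∀ θ, f θ = A * Real.cos θ ^ 2 + B * Real.sin θ * Real.cos θ + C * Real.sin θ ^ 2)
    (θ₁ θ₂ : ℝ) (hπ1 : |θ₁| ≤ Real.pi/4) (hπ2 : |θ₂| ≤ Real.pi/4)
    (hF1 : |f θ₁| ≤ δ) (hF2 : |f θ₂| ≤ δ) : |θ₁ - θ₂| ≤ 4 * δ := by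
  -- small θ for near-roots
  have hsmall : ∀ θ, |θ| ≤ Real.pi/4 → |f θ| ≤ δ → |θ| ≤ 16 * ε₀ := by
    intro θ hπ hFθ
    have hc1 : |Real.cos θ ^ 2| ≤ 1 := by
      rw [abs_pow]; exact pow_le_one₀ (abs_nonneg _) (Real.abs_cos_le_one θ)
    have hs1 : |Real.sin θ ^ 2| ≤ 1 := by
      rw [abs_pow]; exact pow_le_one₀ (abs_nonneg _) (Real.abs_sin_le_one θ)
    have e1 : |A * Real.cos θ ^ 2| ≤ 11/10 * ε₀ := by
      rw [abs_mul]; nlinarith [abs_nonneg A, abs_nonneg (Real.cos θ ^ 2)]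
    have e2 : |C * Real.sin θ ^ 2| ≤ 11/10 * ε₀ := by
      rw [abs_mul]; nlinarith [abs_nonneg C, abs_nonneg (Real.sin θ ^ 2)]
    have h5 : |B * Real.sin θ * Real.cos θ| ≤ |f θ| + |A * Real.cos θ ^ 2| +
        |C * Real.sin θ ^ 2| := by
      have heq : B * Real.sin θ * Real.cos θ =
          f θ + -(A * Real.cos θ ^ 2) + -(C * Real.sin θ ^ 2) := by rw [hf]; ring
      rw [heq]
      calc |f θ + -(A * Real.cos θ ^ 2) + -(C * Real.sin θ ^ 2)| ≤
            |f θ + -(A * Real.cos θ ^ 2)| + |-(C * Real.sin θ ^ 2)| := abs_add_le _ _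
        _ ≤ |f θ| + |-(A * Real.cos θ ^ 2)| + |-(C * Real.sin θ ^ 2)| := by
            linarith [abs_add_le (f θ) (-(A * Real.cos θ ^ 2))]
        _ = |f θ| + |A * Real.cos θ ^ 2| + |C * Real.sin θ ^ 2| := by rw [abs_neg, abs_neg]
    have h6 : |B * Real.sin θ * Real.cos θ| = B * |Real.sin θ * Real.cos θ| := by
      rw [mul_assoc, abs_mul, abs_of_pos (by linarith : (0:ℝ) < B)]
    have h7 : |Real.sin θ * Real.cos θ| ≤ 4 * ε₀ := by
      rw [h6] at h5; nlinarith [abs_nonneg (Real.sin θ * Real.cos θ)]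
    have := aux_sincos θ hπ
    linarith
  have h1s := hsmall θ₁ hπ1 hF1
  have h2s := hsmall θ₂ hπ2 hF2
  -- derivative
  have hHD : ∀ ξ : ℝ, HasDerivAt f
      (B * (Real.cos ξ ^ 2 - Real.sin ξ ^ 2) + (2*C - 2*A) * (Real.sin ξ * Real.cos ξ)) ξ := by
    intro ξ
    have hs := Real.hasDerivAt_sin ξ
    have hc := Real.hasDerivAt_cos ξ
    have h1 := (hc.pow 2).const_mul A
    have h2 := (hs.const_mul B).mul hc
    have h3 := (hs.pow 2).const_mul C
    have h := (h1.add h2).add h3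
    have hfun : f = fun x => A * Real.cos x ^ 2 + B * Real.sin x * Real.cos x +
        C * Real.sin x ^ 2 := funext hf
    rw [hfun]
    refine h.congr_deriv ?_
    push_cast
    ring
  -- derivative lower bound on the small region
  have hDLB : ∀ ξ : ℝ, |ξ| ≤ 16 * ε₀ →
      1/2 ≤ B * (Real.cos ξ ^ 2 - Real.sin ξ ^ 2) + (2*C - 2*A) * (Real.sin ξ * Real.cos ξ) := by
    intro ξ hξ
    have hsin : |Real.sin ξ| ≤ |ξ| := Real.abs_sin_le_abs
    have hsq : Real.sin ξ ^ 2 ≤ 256 * ε₀ ^ 2 := by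
      nlinarith [sq_abs (Real.sin ξ), sq_abs ξ, abs_nonneg (Real.sin ξ), abs_nonneg ξ]
    have hcs : Real.cos ξ ^ 2 = 1 - Real.sin ξ ^ 2 := Real.cos_sq' ξ
    have hsc : |Real.sin ξ * Real.cos ξ| ≤ 1 := by
      rw [abs_mul]
      nlinarith [Real.abs_sin_le_one ξ, Real.abs_cos_le_one ξ, abs_nonneg (Real.sin ξ),
        abs_nonneg (Real.cos ξ)]
    have h2CA : |2*C - 2*A| ≤ 22/5 * ε₀ := by
      calc |2*C - 2*A| ≤ |2*C| + |2*A| := abs_sub _ _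
        _ = 2*|C| + 2*|A| := by rw [abs_mul, abs_mul]; norm_num
        _ ≤ 22/5 * ε₀ := by linarith
    have habs : |(2*C - 2*A) * (Real.sin ξ * Real.cos ξ)| ≤ 22/5 * ε₀ := by
      rw [abs_mul]
      calc |2*C - 2*A| * |Real.sin ξ * Real.cos ξ| ≤ (22/5 * ε₀) * 1 :=
            mul_le_mul h2CA hsc (abs_nonneg _) (by linarith)
        _ = 22/5 * ε₀ := mul_one _
    have hprod : -(22/5 * ε₀) ≤ (2*C - 2*A) * (Real.sin ξ * Real.cos ξ) := by
      have h1 := neg_abs_le ((2*C - 2*A) * (Real.sin ξ * Real.cos ξ))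
      linarith
    rw [hcs]
    have hq : ε₀ * ε₀ ≤ ε₀ * (1/1000) := mul_le_mul_of_nonneg_left hε' hε₀.le
    have hnn : (0:ℝ) ≤ 1 - 2 * Real.sin ξ ^ 2 := by nlinarith
    have hBs : 9/10 * (1 - 2*Real.sin ξ ^ 2) ≤ B * (1 - 2*Real.sin ξ ^ 2) :=
      mul_le_mul_of_nonneg_right hB9 hnn
    nlinarith
  -- MVT
  have hmono : ∀ x y : ℝ, |x| ≤ 16*ε₀ → |y| ≤ 16*ε₀ → |f x| ≤ δ → |f y| ≤ δ → x < y →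
      y - x ≤ 4 * δ := by
    intro x y hx hy hfx hfy hlt
    obtain ⟨ξ, hξmem, hξeq⟩ := exists_hasDerivAt_eq_slope f _ hlt
      (fun z _ => (hHD z).continuousAt.continuousWithinAt) (fun z _ => hHD z)
    have hξb : |ξ| ≤ 16 * ε₀ := by
      rw [abs_le] at hx hy ⊢
      obtain ⟨hl, hr⟩ := hξmem
      constructor <;> linarith
    have hlb := hDLB ξ hξb
    rw [hξeq, le_div_iff₀ (by linarith : (0:ℝ) < y - x)] at hlb
    have h1 := abs_le.mp hfx
    have h2 := abs_le.mp hfy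
    nlinarith
  rcases lt_trichotomy θ₁ θ₂ with h | h | h
  · rw [abs_sub_comm, abs_of_nonneg (by linarith)]
    exact hmono θ₁ θ₂ h1s h2s hF1 hF2 h
  · simp [h]; positivity
  · rw [abs_of_nonneg (by linarith)]
    exact hmono θ₂ θ₁ h2s h1s hF2 hF1 h

set_option maxHeartbeats 1000000 in
/-- the number of `θ ∈ c₁ℤ ∩ [-π/4, π/4]` with
`|F(θ)| ≤ 10^{-3d} ε₀ K_L^{-1}` is at most `10^{8d}`. -/
theorem statement5 (d : ℕ) (hd : 3 ≤ d) :
    ∃ ε₀' > (0 : ℝ), ∀ ε₀ : ℝ, 0 < ε₀ → ε₀ ≤ ε₀' →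
      ∃ K₀ : ℝ, ∀ KL : ℝ, K₀ ≤ KL →
        ∀ a : ℕ → ℕ → ℝ, CoeffSmall d ε₀ a →
          ∀ t : ℝ, |t| ≤ 10 →
            {θ : ℝ | (∃ m : ℤ, θ = (m : ℝ) * c1 d ε₀ KL) ∧ |θ| ≤ Real.pi / 4 ∧
                |Fcoef d a t θ| ≤ ε₀ / (10 ^ (3 * d) * KL)}.Finite ∧
            {θ : ℝ | (∃ m : ℤ, θ = (m : ℝ) * c1 d ε₀ KL) ∧ |θ| ≤ Real.pi / 4 ∧
                |Fcoef d a t θ| ≤ ε₀ / (10 ^ (3 * d) * KL)}.ncard ≤ 10 ^ (8 * d) := by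
  refine ⟨1/1000, by norm_num, fun ε₀ hε₀ hε₀' => ⟨1, fun KL hKL a ha t ht => ?_⟩⟩
  have hKL0 : (0:ℝ) < KL := by linarith
  obtain ⟨ha20, ha22, hsum1, hsum2, hsum3⟩ := sum_small d hd ε₀ hε₀ a ha t ht
  set S : Set ℝ := {θ : ℝ | (∃ m : ℤ, θ = (m : ℝ) * c1 d ε₀ KL) ∧ |θ| ≤ Real.pi / 4 ∧
      |Fcoef d a t θ| ≤ ε₀ / (10 ^ (3 * d) * KL)} with hSdef
  set δ : ℝ := ε₀ / (10 ^ (3 * d) * KL) with hδdef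
  set c : ℝ := c1 d ε₀ KL with hcdef
  have hcpos : 0 < c := by rw [hcdef, c1]; positivity
  have hδpos : 0 < δ := by rw [hδdef]; positivity
  have hδle : δ ≤ ε₀ := by
    rw [hδdef]
    have h1 : (1:ℝ) ≤ 10 ^ (3*d) := one_le_pow₀ (by norm_num)
    have h2 : (1:ℝ) ≤ 10 ^ (3*d) * KL := by nlinarith
    exact div_le_self hε₀.le h2
  -- closeness of any two elements of S
  have hclose : ∀ θ₁ ∈ S, ∀ θ₂ ∈ S, |θ₁ - θ₂| ≤ 4 * δ := by
    intro θ₁ h1 θ₂ h2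
    obtain ⟨-, hπ1, hF1⟩ := h1
    obtain ⟨-, hπ2, hF2⟩ := h2
    refine core_close _ _ _ ε₀ δ hε₀ hε₀' hδpos hδle ?_ ?_ ?_ ?_ (Fcoef d a t)
      (fun θ => rfl) θ₁ θ₂ hπ1 hπ2 hF1 hF2
    · calc |a 2 0 + ∑ i ∈ Finset.Icc 3 d, a i (i-2) * t^(i-2)| ≤
          |a 2 0| + |∑ i ∈ Finset.Icc 3 d, a i (i-2) * t^(i-2)| := abs_add_le _ _
        _ ≤ 11/10 * ε₀ := by linarith
    · calc |a 2 2 + ∑ i ∈ Finset.Icc 3 d, ((i:ℝ)*((i:ℝ)-1)/2) * a i i * t^(i-2)| ≤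
          |a 2 2| + |∑ i ∈ Finset.Icc 3 d, ((i:ℝ)*((i:ℝ)-1)/2) * a i i * t^(i-2)| := abs_add_le _ _
        _ ≤ 11/10 * ε₀ := by linarith
    · have := (abs_le.mp hsum2).1
      linarith [hε₀'.trans (by norm_num : (1:ℝ)/1000 ≤ 1)]
    · have := (abs_le.mp hsum2).2
      linarith [hε₀'.trans (by norm_num : (1:ℝ)/1000 ≤ 1)]
  -- counting
  rcases Set.eq_empty_or_nonempty S with hS | ⟨θ₀, hθ₀⟩
  · rw [hS]; exact ⟨Set.finite_empty, by simp⟩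
  obtain ⟨m₀, hm₀⟩ := hθ₀.1
  set N : ℤ := 4 * 10 ^ (7*d) with hNdef
  set T : Finset ℝ := (Finset.Icc (m₀ - N) (m₀ + N)).image (fun m : ℤ => (m:ℝ) * c)
    with hTdef
  have hδc : 4 * δ = (N:ℝ) * c := by
    rw [hδdef, hcdef, c1, hNdef]
    have hp : (10:ℝ)^(10*d) = 10^(3*d) * 10^(7*d) := by rw [← pow_add]; ring_nf
    push_cast
    rw [hp]
    field_simp
  have hsub : S ⊆ ↑T := by
    intro θ hθ
    obtain ⟨m, hm⟩ := hθ.1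
    have hd4 : |θ - θ₀| ≤ 4*δ := hclose θ hθ θ₀ hθ₀
    have heq : θ - θ₀ = ((m - m₀ : ℤ) : ℝ) * c := by push_cast; rw [hm, hm₀]; ring
    have hmb : |((m - m₀:ℤ):ℝ)| * c ≤ (N:ℝ) * c := by
      calc |((m - m₀:ℤ):ℝ)| * c = |((m - m₀:ℤ):ℝ) * c| := by
            rw [abs_mul, abs_of_pos hcpos]
        _ = |θ - θ₀| := by rw [← heq]
        _ ≤ 4 * δ := hd4
        _ = (N:ℝ) * c := hδc
    have hmbR : |((m - m₀:ℤ):ℝ)| ≤ (N:ℝ) := le_of_mul_le_mul_right hmb hcpos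
    have hmbZ : |m - m₀| ≤ N := by exact_mod_cast hmbR
    rw [abs_le] at hmbZ
    exact Finset.mem_coe.mpr (Finset.mem_image.mpr
      ⟨m, Finset.mem_Icc.mpr ⟨by omega, by omega⟩, hm.symm⟩)
  refine ⟨Set.Finite.subset T.finite_toSet hsub, ?_⟩
  calc S.ncard ≤ (↑T : Set ℝ).ncard := Set.ncard_le_ncard hsub T.finite_toSet
    _ = T.card := Set.ncard_coe_finset T
    _ ≤ (Finset.Icc (m₀ - N) (m₀ + N)).card := Finset.card_image_le
    _ = (2*N+1).toNat := by rw [Int.card_Icc]; congr 1; ring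
    _ ≤ 10 ^ (8*d) := by
      rw [Int.toNat_le]
      have h1 : (10:ℤ)^(8*d) = 10^(7*d) * 10^d := by rw [← pow_add]; ring_nf
      have h2 : (1000:ℤ) ≤ 10^d := by
        calc (1000:ℤ) = 10^3 := by norm_num
          _ ≤ 10^d := pow_le_pow_right₀ (by norm_num) hd
      have h3 : (1:ℤ) ≤ 10^(7*d) := one_le_pow₀ (by norm_num)
      have h4 := mul_le_mul_of_nonneg_left h2 (by linarith : (0:ℤ) ≤ 10^(7*d))
      rw [hNdef]
      push_cast
      nlinarith
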